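/- Let H_S be a Hermitian d_S×d_S matrix, H_E a Hermitian d_E×d_E matrix, H_I a Hermitian matrix on ℂ^{d_S}⊗ℂ^{d_E} satisfying (H_S⊗1) H_I = H_I (H_S⊗1), and let ρ_E be a d_E×d_E matrix. Define H_T = H_S⊗1 + 1⊗H_E + H_I and, for t ≥ 0, the map Λ_t(ρ) := Tr_E[ e^{−iH_T t} (ρ⊗ρ_E) e^{iH_T t} ] on d_S×d_S matrices. Then Λ_t is H_S-covariant: for all s, t and all ρ, Λ_t( e^{−iH_S s} ρ e^{iH_S s} ) = e^{−iH_S s} Λ_t(ρ) e^{iH_S s}. -/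

import Mathlib

open Matrix

/-- Tensor product `ρ ⊗ ρE` of a system matrix with an environment matrix. -/
noncomputable def kron2 (d dE : ℕ)
    (ρ : Matrix (Fin d) (Fin d) ℂ) (ρE : Matrix (Fin dE) (Fin dE) ℂ) :
    Matrix (Fin d × Fin dE) (Fin d × Fin dE) ℂ :=
  Matrix.of fun x y => ρ x.1 y.1 * ρE x.2 y.2

/-- Partial trace over the environment factor. -/
noncomputable def trEnv (d dE : ℕ)
    (M : Matrix (Fin d × Fin dE) (Fin d × Fin dE) ℂ) :
    Matrix (Fin d) (Fin d) ℂ :=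
  Matrix.of fun a b => ∑ k : Fin dE, M (a, k) (b, k)


lemma kron2_mul (d dE : ℕ) (A B : Matrix (Fin d) (Fin d) ℂ)
    (C D : Matrix (Fin dE) (Fin dE) ℂ) :
    kron2 d dE A C * kron2 d dE B D = kron2 d dE (A * B) (C * D) := by
  ext ⟨a, k⟩ ⟨b, l⟩
  simp only [kron2, Matrix.mul_apply, Matrix.of_apply, Fintype.sum_prod_type]
  rw [Finset.sum_mul_sum]
  simp [Finset.mul_sum, mul_assoc, mul_comm, mul_left_comm]

lemma kron2_one (d dE : ℕ) : kron2 d dE 1 1 = 1 := by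
  ext ⟨a, k⟩ ⟨b, l⟩
  simp [kron2, Matrix.one_apply, Prod.ext_iff, ite_and]
  split_ifs <;> simp_all

lemma kron2_smul (d dE : ℕ) (c : ℂ) (A : Matrix (Fin d) (Fin d) ℂ)
    (B : Matrix (Fin dE) (Fin dE) ℂ) :
    kron2 d dE (c • A) B = c • kron2 d dE A B := by
  ext ⟨a, k⟩ ⟨b, l⟩
  simp [kron2, mul_assoc]

noncomputable def kronHom (d dE : ℕ) :
    Matrix (Fin d) (Fin d) ℂ →+* Matrix (Fin d × Fin dE) (Fin d × Fin dE) ℂ where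
  toFun A := kron2 d dE A 1
  map_one' := kron2_one d dE
  map_mul' A B := by
    show kron2 d dE (A * B) 1 = kron2 d dE A 1 * kron2 d dE B 1
    rw [kron2_mul, one_mul]
  map_zero' := by ext ⟨a, k⟩ ⟨b, l⟩; simp [kron2]
  map_add' A B := by ext ⟨a, k⟩ ⟨b, l⟩; simp [kron2, add_mul]

lemma kronHom_continuous (d dE : ℕ) : Continuous (kronHom d dE) := by
  apply continuous_pi; intro x; apply continuous_pi; intro y
  show Continuous fun A : Matrix (Fin d) (Fin d) ℂ =>
    A x.1 y.1 * (1 : Matrix (Fin dE) (Fin dE) ℂ) x.2 y.2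
  exact (continuous_id.matrix_elem x.1 y.1).mul continuous_const

lemma trEnv_kron_left (d dE : ℕ) (A : Matrix (Fin d) (Fin d) ℂ)
    (M : Matrix (Fin d × Fin dE) (Fin d × Fin dE) ℂ) :
    trEnv d dE (kron2 d dE A 1 * M) = A * trEnv d dE M := by
  ext a b
  simp only [trEnv, Matrix.mul_apply, Matrix.of_apply, kron2, Fintype.sum_prod_type,
    Matrix.one_apply, mul_ite, mul_one, mul_zero, ite_mul, zero_mul]
  rw [Finset.sum_comm]
  simp [Finset.mul_sum]

lemma trEnv_kron_right (d dE : ℕ) (B : Matrix (Fin d) (Fin d) ℂ)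
    (M : Matrix (Fin d × Fin dE) (Fin d × Fin dE) ℂ) :
    trEnv d dE (M * kron2 d dE B 1) = trEnv d dE M * B := by
  ext a b
  simp only [trEnv, Matrix.mul_apply, Matrix.of_apply, kron2, Fintype.sum_prod_type,
    Matrix.one_apply, mul_ite, mul_one, mul_zero, ite_mul, zero_mul]
  rw [Finset.sum_comm]
  simp [Finset.sum_mul]

open NormedSpace in
lemma kron2_exp (d dE : ℕ) (X : Matrix (Fin d) (Fin d) ℂ) :
    kron2 d dE (exp X) 1 = exp (kron2 d dE X 1) := by
  letI : SeminormedRing (Matrix (Fin d) (Fin d) ℂ) := Matrix.linftyOpSemiNormedRing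
  letI : NormedRing (Matrix (Fin d) (Fin d) ℂ) := Matrix.linftyOpNormedRing
  letI : NormedAlgebra ℂ (Matrix (Fin d) (Fin d) ℂ) := Matrix.linftyOpNormedAlgebra
  letI : SeminormedRing (Matrix (Fin d × Fin dE) (Fin d × Fin dE) ℂ) :=
    Matrix.linftyOpSemiNormedRing
  letI : NormedRing (Matrix (Fin d × Fin dE) (Fin d × Fin dE) ℂ) := Matrix.linftyOpNormedRing
  letI : NormedAlgebra ℂ (Matrix (Fin d × Fin dE) (Fin d × Fin dE) ℂ) :=
    Matrix.linftyOpNormedAlgebra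
  let +nondep : NormedAlgebra ℚ (Matrix (Fin d) (Fin d) ℂ) := .restrictScalars ℚ ℂ _
  let +nondep : NormedAlgebra ℚ (Matrix (Fin d × Fin dE) (Fin d × Fin dE) ℂ) :=
    .restrictScalars ℚ ℂ _
  exact map_exp (kronHom d dE) (kronHom_continuous d dE) X

open NormedSpace in
lemma exp_commute {n : Type*} [Fintype n] [DecidableEq n]
    (A B : Matrix n n ℂ) (h : Commute A B) :
    Commute (exp A) (exp B) := by
  letI : SeminormedRing (Matrix n n ℂ) := Matrix.linftyOpSemiNormedRing
  letI : NormedRing (Matrix n n ℂ) := Matrix.linftyOpNormedRing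
  letI : NormedAlgebra ℂ (Matrix n n ℂ) := Matrix.linftyOpNormedAlgebra
  exact h.exp

/-- Covariance property underlying the paper's Lemma 3: when the system
Hamiltonian commutes with the interaction Hamiltonian, the microscopically
derived dynamical map `Λ_t(ρ) = Tr_E[e^{-iH_T t}(ρ ⊗ ρ_E)e^{iH_T t}]`
commutes with the free system unitary evolution. -/
theorem stmt_4 (dS dE : ℕ)
    (HS : Matrix (Fin dS) (Fin dS) ℂ) (hHS : HS.IsHermitian)
    (HE : Matrix (Fin dE) (Fin dE) ℂ) (hHE : HE.IsHermitian)
    (HI : Matrix (Fin dS × Fin dE) (Fin dS × Fin dE) ℂ) (hHI : HI.IsHermitian)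
    (hcomm : kron2 dS dE HS 1 * HI = HI * kron2 dS dE HS 1)
    (ρE : Matrix (Fin dE) (Fin dE) ℂ) :
    ∀ (s t : ℝ) (ρ : Matrix (Fin dS) (Fin dS) ℂ),
      trEnv dS dE
        (NormedSpace.exp ((-(Complex.I * (t : ℂ))) •
            (kron2 dS dE HS 1 + kron2 dS dE 1 HE + HI)) *
          kron2 dS dE
            (NormedSpace.exp ((-(Complex.I * (s : ℂ))) • HS) * ρ *
              NormedSpace.exp ((Complex.I * (s : ℂ)) • HS)) ρE *
          NormedSpace.exp ((Complex.I * (t : ℂ)) •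
            (kron2 dS dE HS 1 + kron2 dS dE 1 HE + HI)))
      = NormedSpace.exp ((-(Complex.I * (s : ℂ))) • HS) *
          trEnv dS dE
            (NormedSpace.exp ((-(Complex.I * (t : ℂ))) •
                (kron2 dS dE HS 1 + kron2 dS dE 1 HE + HI)) *
              kron2 dS dE ρ ρE *
              NormedSpace.exp ((Complex.I * (t : ℂ)) •
                (kron2 dS dE HS 1 + kron2 dS dE 1 HE + HI))) *
          NormedSpace.exp ((Complex.I * (s : ℂ)) • HS) := by
  intro s t ρ
  set U : Matrix (Fin dS × Fin dE) (Fin dS × Fin dE) ℂ := kron2 dS dE HS 1 with hU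
  set HT : Matrix (Fin dS × Fin dE) (Fin dS × Fin dE) ℂ := U + kron2 dS dE 1 HE + HI with hHT
  have hUE : Commute U (kron2 dS dE 1 HE) := by
    show U * _ = _ * U
    rw [hU, kron2_mul, kron2_mul, one_mul, mul_one, one_mul, mul_one]
  have hUT : Commute U HT := ((Commute.refl U).add_right hUE).add_right hcomm
  set cs : ℂ := -(Complex.I * (s : ℂ)) with hcs
  set cs' : ℂ := Complex.I * (s : ℂ) with hcs'
  set ct : ℂ := -(Complex.I * (t : ℂ)) with hct
  set ct' : ℂ := Complex.I * (t : ℂ) with hct'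
  set Es := NormedSpace.exp (cs • HS) with hEs
  set Es' := NormedSpace.exp (cs' • HS) with hEs'
  set Et := NormedSpace.exp (ct • HT) with hEt
  set Et' := NormedSpace.exp (ct' • HT) with hEt'
  set A := NormedSpace.exp (cs • U) with hA
  set B := NormedSpace.exp (cs' • U) with hB
  set K := kron2 dS dE ρ ρE with hK
  have hkc : ∀ c : ℂ, kron2 dS dE (NormedSpace.exp (c • HS)) 1
      = NormedSpace.exp (c • U) := by
    intro c
    rw [kron2_exp, kron2_smul]
  have expand : kron2 dS dE (Es * ρ * Es') ρE = A * K * B := by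
    rw [show A = kron2 dS dE Es 1 by rw [hEs, hkc],
      show B = kron2 dS dE Es' 1 by rw [hEs', hkc], hK,
      kron2_mul, kron2_mul, one_mul, mul_one]
  have hAEt : Et * A = A * Et :=
    ((exp_commute _ _ ((hUT.smul_left cs).smul_right ct)).symm).eq
  have hBEt : Et' * B = B * Et' :=
    ((exp_commute _ _ ((hUT.smul_left cs').smul_right ct')).symm).eq
  have rearr : Et * (A * K * B) * Et' = A * (Et * K * Et') * B := by
    calc Et * (A * K * B) * Et' = (Et * A) * K * (B * Et') := by
          simp only [mul_assoc]
      _ = (A * Et) * K * (Et' * B) := by rw [hAEt, ← hBEt]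
      _ = A * (Et * K * Et') * B := by simp only [mul_assoc]
  rw [expand, rearr, show A = kron2 dS dE Es 1 by rw [hEs, hkc],
    show B = kron2 dS dE Es' 1 by rw [hEs', hkc],
    trEnv_kron_right, trEnv_kron_left]
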